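/- Let N ∈ ℝ^{r×r} be invertible and let K̂ ∈ ℝ^{n×n} be the block-constant matrix built from N with blocks of sizes n₁,…,n_r ≥ 1 as above. Then every nonzero eigenvalue of K̂ has absolute value at least (min_a n_a)/‖N^{-1}‖, where ‖·‖ is the operator norm. -/

import Mathlib

open Matrix Finset

/-- For `N ∈ ℝ^{r×r}` symmetric invertible and `K̂` the block-constant
matrix built from `N` with block sizes `n₁,…,n_r ≥ 1`, every nonzero eigenvalue `μ`
of `K̂` satisfies `(min_a n_a)/‖N⁻¹‖ ≤ |μ|` (operator norm). -/
theorem stmt9 {r : ℕ} (hr : 0 < r) (N : Matrix (Fin r) (Fin r) ℝ) (hsymm : N.IsSymm)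
    (hinv : IsUnit N) (m : Fin r → ℕ) (hm : ∀ a, 0 < m a) :
    ∀ μ : ℝ, μ ≠ 0 →
      Module.End.HasEigenvalue
        (Matrix.toLin' ((fun i j => N i.1 j.1)
          : Matrix ((a : Fin r) × Fin (m a)) ((a : Fin r) × Fin (m a)) ℝ)) μ →
      ((Finset.univ.inf' ⟨⟨0, hr⟩, Finset.mem_univ _⟩ m : ℕ) : ℝ)
          / ‖Matrix.toEuclideanCLM (𝕜 := ℝ) N⁻¹‖ ≤ |μ| := by
  intro μ hμ heig
  have : NeZero r := ⟨hr.ne'⟩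
  obtain ⟨v, hv⟩ := heig.exists_hasEigenvector
  have hv0 : v ≠ 0 := hv.right
  have happ : ∀ p, ∑ q : (a : Fin r) × Fin (m a), N p.1 q.1 * v q = μ * v p := by
    intro p
    have := congrFun hv.apply_eq_smul p
    exact this
  set s : Fin r → ℝ := fun b => ∑ j : Fin (m b), v ⟨b, j⟩ with hs
  have hsum : ∀ p : (a : Fin r) × Fin (m a), μ * v p = N.mulVec s p.1 := by
    intro p
    rw [← happ p, Matrix.mulVec, dotProduct]
    rw [← Finset.univ_sigma_univ, Finset.sum_sigma]
    simp [hs, Finset.mul_sum]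
  set w : Fin r → ℝ := fun a => N.mulVec s a / μ with hw
  have hvw : ∀ p : (a : Fin r) × Fin (m a), v p = w p.1 := by
    intro p
    rw [hw]
    field_simp
    rw [mul_comm]
    exact hsum p
  have hw0 : w ≠ 0 := by
    intro h
    apply hv0
    funext p
    rw [hvw p, h]
    rfl
  have hsw : s = fun b => (m b : ℝ) * w b := by
    funext b
    simp [hs, hvw]
  set D : Fin r → ℝ := fun b => (m b : ℝ) * w b with hD
  have hND : N.mulVec D = μ • w := by
    funext a
    rw [← hsw]
    simp only [Pi.smul_apply, smul_eq_mul]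
    have h := hsum ⟨a, ⟨0, hm a⟩⟩
    rw [hvw ⟨a, ⟨0, hm a⟩⟩] at h
    exact h.symm
  have hNinv : N⁻¹ * N = 1 := Matrix.nonsing_inv_mul N ((Matrix.isUnit_iff_isUnit_det N).mp hinv)
  have hDkey : D = μ • N⁻¹.mulVec w := by
    have : N⁻¹.mulVec (N.mulVec D) = D := by
      rw [Matrix.mulVec_mulVec, hNinv, Matrix.one_mulVec]
    rw [← this, hND, Matrix.mulVec_smul]
  -- move to EuclideanSpace
  set W : EuclideanSpace ℝ (Fin r) := (WithLp.equiv 2 _).symm w with hW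
  set DW : EuclideanSpace ℝ (Fin r) := (WithLp.equiv 2 _).symm D with hDW
  have hWn : W ≠ 0 := by
    simpa [hW] using hw0
  have hclm : DW = μ • (Matrix.toEuclideanCLM (𝕜 := ℝ) N⁻¹) W := by
    rw [hW, WithLp.equiv_symm_apply, Matrix.toEuclideanCLM_toLp, hDW, hDkey]
    rfl
  set c : ℕ := Finset.univ.inf' ⟨⟨0, hr⟩, Finset.mem_univ _⟩ m with hc
  have hcle : ∀ a, (c : ℝ) ≤ (m a : ℝ) := fun a =>
    Nat.cast_le.mpr (Finset.inf'_le m (Finset.mem_univ a))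
  have hlow : (c : ℝ) * ‖W‖ ≤ ‖DW‖ := by
    rw [EuclideanSpace.norm_eq, EuclideanSpace.norm_eq]
    rw [← Real.sqrt_sq (by positivity : (0:ℝ) ≤ (c:ℝ)), ← Real.sqrt_mul (by positivity)]
    apply Real.sqrt_le_sqrt
    rw [Finset.mul_sum]
    apply Finset.sum_le_sum
    intro a _
    have h1 : (W : EuclideanSpace ℝ (Fin r)) a = w a := rfl
    have h2 : (DW : EuclideanSpace ℝ (Fin r)) a = (m a : ℝ) * w a := rfl
    rw [h1, h2]
    rw [Real.norm_eq_abs, Real.norm_eq_abs, sq_abs, sq_abs, mul_pow]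
    have h3 : (c:ℝ)^2 ≤ (m a:ℝ)^2 := pow_le_pow_left₀ (by positivity) (hcle a) 2
    exact mul_le_mul_of_nonneg_right h3 (sq_nonneg _)
  have hup : ‖DW‖ ≤ |μ| * (‖Matrix.toEuclideanCLM (𝕜 := ℝ) N⁻¹‖ * ‖W‖) := by
    rw [hclm, norm_smul, Real.norm_eq_abs]
    exact mul_le_mul_of_nonneg_left ((Matrix.toEuclideanCLM (𝕜 := ℝ) N⁻¹).le_opNorm W)
      (abs_nonneg μ)
  have hWpos : 0 < ‖W‖ := norm_pos_iff.mpr hWn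
  have hkey : (c : ℝ) ≤ |μ| * ‖Matrix.toEuclideanCLM (𝕜 := ℝ) N⁻¹‖ := by
    have := le_trans hlow hup
    rw [← mul_assoc] at this
    exact le_of_mul_le_mul_right this hWpos
  have hNinvne : (Matrix.toEuclideanCLM (𝕜 := ℝ) N⁻¹) ≠ 0 := by
    intro h
    have hN0 : N⁻¹ = 0 := by
      have := Matrix.toEuclideanCLM (n := Fin r) (𝕜 := ℝ) |>.injective
      exact this (by simpa using h)
    rw [hN0, Matrix.zero_mul] at hNinv
    exact one_ne_zero hNinv.symm
  have hnormpos : 0 < ‖Matrix.toEuclideanCLM (𝕜 := ℝ) N⁻¹‖ := norm_pos_iff.mpr hNinvne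
  rw [div_le_iff₀ hnormpos]
  linarith [hkey]
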